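/- Let U : [0,1] → ℝ be continuous. Suppose there exist two increasing sequences (s_n) and (t_n) of positive numbers with s_n → 1 and t_n → 1 such that U(s_n) ≤ U(1) ≤ U(t_n) for all n. If for every T' ∈ (0,1) the restriction of U to [0,T'] is welded on [0,T'], then U is welded on [0,1]. -/

import Mathlib

/-- A backward solution of the backward chordal Loewner equation on `[0,s)` for the
driving function `U : [0,T] → ℝ`. -/
def IsBackwardSol (U : ℝ → ℝ) (T s : ℝ) (x : ℝ → ℝ) : Prop :=
  ∀ t ∈ Set.Ico (0 : ℝ) s, x t ≠ U (T - t) ∧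
    HasDerivWithinAt x (-2 / (x t - U (T - t))) (Set.Ico 0 s) t

/-- The backward solution `x` hits the singularity at time `s`. -/
def HitsSingularity (U : ℝ → ℝ) (T s : ℝ) (x : ℝ → ℝ) : Prop :=
  Filter.Tendsto x (nhdsWithin s (Set.Iio s)) (nhds (U (T - s)))

/-- The driving function `U` is welded on `[0,T]`. -/
def Welded (U : ℝ → ℝ) (T : ℝ) : Prop :=
  ∀ s ∈ Set.Ioc (0 : ℝ) T, ∃ x₀ y₀ : ℝ, x₀ < U T ∧ U T < y₀ ∧
    {a : ℝ | ∃ x : ℝ → ℝ, x 0 = a ∧ IsBackwardSol U T s x ∧ HitsSingularity U T s x}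
      = {x₀, y₀}

open Set Filter

section Aux

/-- Continuity of a backward solution on `[0,s)`. -/
lemma IsBackwardSol.cont {U : ℝ → ℝ} {T s : ℝ} {x : ℝ → ℝ}
    (h : IsBackwardSol U T s x) : ContinuousOn x (Ico 0 s) :=
  fun t ht => ((h t ht).2).continuousWithinAt

lemma contUcomp {U : ℝ → ℝ} (hU : ContinuousOn U (Icc 0 1)) {T b : ℝ}
    (hb : 0 ≤ b) (hbT : b ≤ T) (hT : T ≤ 1) :
    ContinuousOn (fun t => U (T - t)) (Icc 0 b) := by
  apply hU.comp (Continuous.continuousOn (by continuity))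
  intro z hz
  exact ⟨by linarith [hz.2], by linarith [hz.1]⟩

/-- A backward solution starting above the driving function stays above it. -/
lemma side_pos {U : ℝ → ℝ} (hU : ContinuousOn U (Icc 0 1)) {T s : ℝ}
    (hT : T ≤ 1) (hsT : s ≤ T) {x : ℝ → ℝ}
    (h : IsBackwardSol U T s x) (h0 : U T < x 0) :
    ∀ t ∈ Ico (0:ℝ) s, U (T - t) < x t := by
  intro t ht
  by_contra hle
  push_neg at hle
  have hne := (h t ht).1
  have hlt : x t < U (T - t) := lt_of_le_of_ne hle hne
  have hsub : Icc (0:ℝ) t ⊆ Ico 0 s := fun z hz => ⟨hz.1, lt_of_le_of_lt hz.2 ht.2⟩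
  have hxc : ContinuousOn x (Icc 0 t) := h.cont.mono hsub
  have hUc : ContinuousOn (fun r => U (T - r)) (Icc 0 t) :=
    contUcomp hU ht.1 (le_trans (le_of_lt ht.2) hsT) hT
  have hfc : ContinuousOn (fun r => x r - U (T - r)) (Icc 0 t) := hxc.sub hUc
  have h0' : (0:ℝ) < x 0 - U (T - 0) := by rw [sub_zero]; linarith
  have ht' : x t - U (T - t) < 0 := sub_neg.2 hlt
  have hmem : (0:ℝ) ∈ Icc (x t - U (T - t)) (x 0 - U (T - 0)) := ⟨le_of_lt ht', le_of_lt h0'⟩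
  obtain ⟨c, hc, hc0⟩ := intermediate_value_Icc' ht.1 hfc hmem
  exact (h c (hsub hc)).1 (sub_eq_zero.1 hc0)

/-- Two backward solutions on the same side hitting the singularity at the same time agree. -/
lemma uniq_same_side {U : ℝ → ℝ} (hU : ContinuousOn U (Icc 0 1)) {T s : ℝ}
    (hT : T ≤ 1) (hs0 : 0 < s) (hsT : s ≤ T) {x y : ℝ → ℝ}
    (hx : IsBackwardSol U T s x) (hy : IsBackwardSol U T s y)
    (hxs : ∀ t ∈ Ico (0:ℝ) s, U (T - t) < x t) (hys : ∀ t ∈ Ico (0:ℝ) s, U (T - t) < y t)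
    (hxh : HitsSingularity U T s x) (hyh : HitsSingularity U T s y) :
    ∀ t ∈ Ico (0:ℝ) s, x t = y t := by
  intro t₀ ht₀
  by_contra hne
  set φ : ℝ → ℝ := fun t => (y t - x t) ^ 2 with hφdef
  have hφpos : 0 < φ t₀ := by
    have h1 : y t₀ - x t₀ ≠ 0 := sub_ne_zero.2 fun h => hne h.symm
    exact lt_of_le_of_ne (sq_nonneg _) (Ne.symm (pow_ne_zero 2 h1))
  -- derivative of φ at interior points
  have hD : ∀ r ∈ Ioo (0:ℝ) s, HasDerivAt φ
      (2 * (y r - x r) * (-2 / (y r - U (T - r)) - -2 / (x r - U (T - r)))) r := by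
    intro r hr
    have hrIco : r ∈ Ico (0:ℝ) s := ⟨le_of_lt hr.1, hr.2⟩
    have hnhds : Ico (0:ℝ) s ∈ nhds r := Ico_mem_nhds hr.1 hr.2
    have hdx : HasDerivAt x (-2 / (x r - U (T - r))) r := ((hx r hrIco).2).hasDerivAt hnhds
    have hdy : HasDerivAt y (-2 / (y r - U (T - r))) r := ((hy r hrIco).2).hasDerivAt hnhds
    have := ((hdy.sub hdx).pow 2)
    convert this using 1
    push_cast
    · rfl
    · rfl
    · rfl
    · simp only [Pi.sub_apply, Nat.cast_ofNat, pow_one]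
      ring
  have hDnn : ∀ r ∈ Ioo (0:ℝ) s,
      0 ≤ 2 * (y r - x r) * (-2 / (y r - U (T - r)) - -2 / (x r - U (T - r))) := by
    intro r hr
    have hrIco : r ∈ Ico (0:ℝ) s := ⟨le_of_lt hr.1, hr.2⟩
    have ha : 0 < x r - U (T - r) := sub_pos.2 (hxs r hrIco)
    have hb : 0 < y r - U (T - r) := sub_pos.2 (hys r hrIco)
    have hid : 2 * (y r - x r) * (-2 / (y r - U (T - r)) - -2 / (x r - U (T - r)))
        = 4 * (y r - x r) ^ 2 / ((x r - U (T - r)) * (y r - U (T - r))) := by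
      field_simp
      ring
    rw [hid]
    positivity
  -- φ is monotone on [t₀, r] for r < s
  have hmono : ∀ r ∈ Ioo t₀ s, φ t₀ ≤ φ r := by
    intro r hr
    have hsub : Icc t₀ r ⊆ Ico 0 s := fun z hz =>
      ⟨le_trans ht₀.1 hz.1, lt_of_le_of_lt hz.2 hr.2⟩
    have hsub' : Ioo t₀ r ⊆ Ioo 0 s := fun z hz =>
      ⟨lt_of_le_of_lt ht₀.1 hz.1, lt_trans hz.2 hr.2⟩
    have hcont : ContinuousOn φ (Icc t₀ r) :=
      ((hy.cont.mono hsub).sub (hx.cont.mono hsub)).pow 2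
    have hdiff : DifferentiableOn ℝ φ (interior (Icc t₀ r)) := by
      rw [interior_Icc]
      exact fun z hz => (hD z (hsub' hz)).differentiableAt.differentiableWithinAt
    have hnn : ∀ z ∈ interior (Icc t₀ r), 0 ≤ deriv φ z := by
      rw [interior_Icc]
      intro z hz
      rw [(hD z (hsub' hz)).deriv]
      exact hDnn z (hsub' hz)
    exact monotoneOn_of_deriv_nonneg (convex_Icc t₀ r) hcont hdiff hnn
      (left_mem_Icc.2 (le_of_lt hr.1)) (right_mem_Icc.2 (le_of_lt hr.1)) (le_of_lt hr.1)
  -- φ tends to 0 at the singularity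
  have hlim : Filter.Tendsto φ (nhdsWithin s (Iio s)) (nhds 0) := by
    have h1 := hyh.sub hxh
    rw [sub_self] at h1
    have := h1.pow 2
    simpa using this
  have hev : ∀ᶠ r in nhdsWithin s (Iio s), φ r < φ t₀ := hlim.eventually (gt_mem_nhds hφpos)
  have hIoo : Ioo t₀ s ∈ nhdsWithin s (Iio s) := Ioo_mem_nhdsLT_of_mem ⟨ht₀.2, le_refl s⟩
  have hev2 : ∀ᶠ r in nhdsWithin s (Iio s), r ∈ Ioo t₀ s := eventually_of_mem hIoo fun r hr => hr
  obtain ⟨r, hr1, hr2⟩ := (hev.and hev2).exists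
  exact absurd (hmono r hr2) (not_le.2 hr1)

lemma tendsto_shift (a b : ℝ) :
    Filter.Tendsto (fun r : ℝ => r + a) (nhdsWithin b (Iio b)) (nhdsWithin (b + a) (Iio (b + a))) := by
  apply tendsto_nhdsWithin_of_tendsto_nhds_of_eventually_within
  · exact ((continuous_id.add continuous_const).tendsto b).mono_left nhdsWithin_le_nhds
  · filter_upwards [self_mem_nhdsWithin] with r hr
    exact (add_lt_add_iff_right a).2 hr

lemma sol_shift {U : ℝ → ℝ} {T s : ℝ} {x : ℝ → ℝ} (h : IsBackwardSol U T s x)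
    {ε : ℝ} (hε : 0 ≤ ε) :
    IsBackwardSol U (T - ε) (s - ε) (fun t => x (t + ε)) := by
  intro t ht
  have htε : t + ε ∈ Ico (0:ℝ) s := ⟨by linarith [ht.1], by linarith [ht.2]⟩
  obtain ⟨hne, hd⟩ := h (t + ε) htε
  have harg : T - ε - t = T - (t + ε) := by ring
  constructor
  · rw [harg]; exact hne
  · have hg : HasDerivWithinAt (fun r : ℝ => r + ε) 1 (Ico 0 (s - ε)) t :=
      ((hasDerivAt_id t).add_const ε).hasDerivWithinAt
    have hmap : MapsTo (fun r : ℝ => r + ε) (Ico 0 (s - ε)) (Ico 0 s) := by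
      intro z hz
      simp only [mem_Ico] at hz ⊢
      constructor <;> linarith
    have hcomp := hd.comp t hg hmap
    rw [mul_one] at hcomp
    rw [harg]
    exact hcomp

lemma hits_shift {U : ℝ → ℝ} {T s : ℝ} {x : ℝ → ℝ} (h : HitsSingularity U T s x)
    {ε : ℝ} : HitsSingularity U (T - ε) (s - ε) (fun t => x (t + ε)) := by
  have hmap : Filter.Tendsto (fun r : ℝ => r + ε)
      (nhdsWithin (s - ε) (Iio (s - ε))) (nhdsWithin s (Iio s)) := by
    have := tendsto_shift ε (s - ε)
    rwa [show s - ε + ε = s by ring] at this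
  have := h.comp hmap
  rw [HitsSingularity, show T - ε - (s - ε) = T - s by ring]
  exact this

lemma isBackwardSol_neg {U : ℝ → ℝ} {T s : ℝ} {x : ℝ → ℝ} (h : IsBackwardSol U T s x) :
    IsBackwardSol (fun r => -U r) T s (fun t => -x t) := by
  intro t ht
  obtain ⟨hne, hd⟩ := h t ht
  constructor
  · exact fun h' => hne (neg_injective h')
  · have := hd.neg
    have hval : -(-2 / (x t - U (T - t))) = -2 / (-x t - -U (T - t)) := by
      rw [show (-x t - -U (T - t)) = -(x t - U (T - t)) by ring, div_neg]
    rw [hval] at this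
    exact this

lemma hitsSingularity_neg {U : ℝ → ℝ} {T s : ℝ} {x : ℝ → ℝ} (h : HitsSingularity U T s x) :
    HitsSingularity (fun r => -U r) T s (fun t => -x t) :=
  h.neg

lemma welded_neg {U : ℝ → ℝ} {T : ℝ} (h : Welded U T) : Welded (fun r => -U r) T := by
  intro s hs
  obtain ⟨x₀, y₀, h1, h2, hset⟩ := h s hs
  refine ⟨-y₀, -x₀, by simpa using h2, by simpa using h1, ?_⟩
  ext a
  simp only [mem_setOf_eq, mem_insert_iff, mem_singleton_iff]
  constructor
  · rintro ⟨x, hx0, hsol, hhit⟩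
    have hsol' : IsBackwardSol U T s (fun t => -x t) := by
      have := isBackwardSol_neg hsol
      simpa [neg_neg] using this
    have hhit' : HitsSingularity U T s (fun t => -x t) := by
      have := hitsSingularity_neg hhit
      simpa [HitsSingularity, neg_neg] using this
    have hmem : -a ∈ ({x₀, y₀} : Set ℝ) := by
      rw [← hset]
      exact ⟨fun t => -x t, by simp [hx0], hsol', hhit'⟩
    rcases hmem with h' | h'
    · right; rw [show a = -(-a) by ring, h']
    · simp only [mem_singleton_iff] at h'
      left; rw [show a = -(-a) by ring, h']
  · have hget : ∀ z ∈ ({x₀, y₀} : Set ℝ), ∃ x : ℝ → ℝ, x 0 = -z ∧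
        IsBackwardSol (fun r => -U r) T s x ∧ HitsSingularity (fun r => -U r) T s x := by
      intro z hz
      rw [← hset] at hz
      obtain ⟨x, hx0, hsol, hhit⟩ := hz
      exact ⟨fun t => -x t, by simp [hx0], isBackwardSol_neg hsol, hitsSingularity_neg hhit⟩
    rintro (rfl | rfl)
    · exact hget y₀ (by right; rfl)
    · exact hget x₀ (by left; rfl)

/-- Derivative at the left endpoint from the one-sided limit of the derivative. -/
lemma hasDerivWithinAt_left {f g : ℝ → ℝ} {σ L : ℝ} (hσ : 0 < σ)
    (hc : Filter.Tendsto f (nhdsWithin 0 (Ioi 0)) (nhds (f 0)))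
    (hd : ∀ r ∈ Ioo (0:ℝ) σ, HasDerivAt f (g r) r)
    (hg : Filter.Tendsto g (nhdsWithin 0 (Ioi 0)) (nhds L)) :
    HasDerivWithinAt f L (Ico 0 σ) 0 := by
  rw [hasDerivWithinAt_iff_tendsto_slope, Ico_diff_left]
  rw [Metric.tendsto_nhdsWithin_nhds] at hg ⊢
  intro ε hε
  obtain ⟨δ, hδ0, hδ⟩ := hg ε hε
  refine ⟨min δ σ, lt_min hδ0 hσ, ?_⟩
  intro r hr hrd
  have hr0 : 0 < r := hr.1
  have hrσ : r < σ := hr.2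
  have hcont : ContinuousOn f (Icc 0 r) := by
    intro z hz
    rcases eq_or_lt_of_le hz.1 with h0 | hpos
    · rw [← h0]
      exact ((continuousWithinAt_Ioi_iff_Ici).1 hc).mono Icc_subset_Ici_self
    · exact (hd z ⟨hpos, lt_of_le_of_lt hz.2 hrσ⟩).continuousAt.continuousWithinAt
  obtain ⟨c, hc', hceq⟩ := exists_hasDerivAt_eq_slope f g hr0 hcont
    (fun z hz => hd z ⟨hz.1, lt_trans hz.2 hrσ⟩)
  have hslope : slope f 0 r = g c := by
    rw [slope_def_field, hceq]
  rw [hslope]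
  apply hδ (mem_Ioi.2 hc'.1)
  have : dist c 0 < dist r 0 := by
    rw [Real.dist_eq, Real.dist_eq, sub_zero, sub_zero, abs_of_pos hc'.1, abs_of_pos hr0]
    exact hc'.2
  exact lt_of_lt_of_le (lt_of_lt_of_le (lt_of_lt_of_le this (le_of_lt hrd)) (le_refl _)) (min_le_left _ _)

end Aux

section Existence

/-- Existence of a hitting backward solution from above, for `T = 1`. -/
lemma exists_upper (U : ℝ → ℝ) (hU : ContinuousOn U (Set.Icc 0 1))
    (t : ℕ → ℝ) (ht1 : ∀ n, t n < 1)
    (htlim : Filter.Tendsto t Filter.atTop (nhds 1)) (hcmp : ∀ n, U 1 ≤ U (t n))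
    (hweld : ∀ T' ∈ Set.Ioo (0:ℝ) 1, Welded U T')
    {s : ℝ} (hs0 : 0 < s) (hs1 : s ≤ 1) :
    ∃ x : ℝ → ℝ, U 1 < x 0 ∧ IsBackwardSol U 1 s x ∧ HitsSingularity U 1 s x := by
  -- A family of hitting solutions for the truncated driving functions.
  have exδ : ∀ δ ∈ Ioo (0:ℝ) s, ∃ y : ℝ → ℝ, U (1 - δ) < y 0 ∧
      IsBackwardSol U (1 - δ) (s - δ) y ∧ HitsSingularity U (1 - δ) (s - δ) y := by
    intro δ hδ
    have hT' : (1 - δ) ∈ Ioo (0:ℝ) 1 := ⟨by linarith [hδ.2], by linarith [hδ.1]⟩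
    obtain ⟨a, b, hab1, hab2, hset⟩ := hweld _ hT' (s - δ) ⟨by linarith [hδ.2], by linarith⟩
    have hb : b ∈ {z : ℝ | ∃ x : ℝ → ℝ, x 0 = z ∧ IsBackwardSol U (1 - δ) (s - δ) x ∧
        HitsSingularity U (1 - δ) (s - δ) x} := by
      rw [hset]; right; rfl
    obtain ⟨y, hy0, hy1, hy2⟩ := hb
    exact ⟨y, hy0 ▸ hab2, hy1, hy2⟩
  choose! Y hY0 hYsol hYhit using exδ
  have hYside : ∀ δ ∈ Ioo (0:ℝ) s, ∀ τ ∈ Ico (0:ℝ) (s - δ), U ((1 - δ) - τ) < Y δ τ := by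
    intro δ hδ
    exact side_pos hU (by linarith [hδ.1]) (by linarith) (hYsol δ hδ) (hY0 δ hδ)
  -- Consistency of the family (uniqueness of same-side hitting solutions).
  have cons : ∀ δ' δ, δ' ∈ Ioo (0:ℝ) s → δ ∈ Ioo (0:ℝ) s → δ' ≤ δ →
      ∀ τ ∈ Ico (0:ℝ) (s - δ), Y δ' (τ + (δ - δ')) = Y δ τ := by
    intro δ' δ hδ' hδ hle
    have hε0 : (0:ℝ) ≤ δ - δ' := by linarith
    have hsol' := sol_shift (hYsol δ' hδ') hε0
    rw [show (1 - δ') - (δ - δ') = 1 - δ by ring, show (s - δ') - (δ - δ') = s - δ by ring] at hsol'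
    have hhit' := hits_shift (hYhit δ' hδ') (ε := δ - δ')
    rw [show (1 - δ') - (δ - δ') = 1 - δ by ring, show (s - δ') - (δ - δ') = s - δ by ring] at hhit'
    have hside0 : U (1 - δ) < (fun τ => Y δ' (τ + (δ - δ'))) 0 := by
      have := hYside δ' hδ' (δ - δ') ⟨hε0, by linarith [hδ.2]⟩
      rw [show (1 - δ') - (δ - δ') = 1 - δ by ring] at this
      simpa using this
    have key := uniq_same_side hU (by linarith [hδ.1]) (by linarith [hδ.2]) (by linarith)
      hsol' (hYsol δ hδ)
      (side_pos hU (by linarith [hδ.1]) (by linarith) hsol' hside0) (hYside δ hδ)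
      hhit' (hYhit δ hδ)
    exact fun τ hτ => key τ hτ
  -- Glue the family into a single function on (0, s).
  set X : ℝ → ℝ := fun r => Y (r / 2) (r / 2) with hXdef
  have hmemhalf : ∀ r ∈ Ioo (0:ℝ) s, r / 2 ∈ Ioo (0:ℝ) s := fun r hr =>
    ⟨by linarith [hr.1], by linarith [hr.1, hr.2]⟩
  have hXeq : ∀ δ ∈ Ioo (0:ℝ) s, ∀ τ ∈ Ico (0:ℝ) (s - δ), X (τ + δ) = Y δ τ := by
    intro δ hδ τ hτ
    show Y ((τ + δ) / 2) ((τ + δ) / 2) = Y δ τ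
    set δ'' := (τ + δ) / 2 with hδ''
    have hδ''mem : δ'' ∈ Ioo (0:ℝ) s := ⟨by simp only [hδ'']; linarith [hτ.1, hδ.1],
      by simp only [hδ'']; linarith [hτ.1, hτ.2, hδ.1]⟩
    rcases le_total δ'' δ with h | h
    · have := cons δ'' δ hδ''mem hδ h τ hτ
      rwa [show τ + (δ - δ'') = δ'' by simp only [hδ'']; ring] at this
    · have := cons δ δ'' hδ hδ''mem h δ'' ⟨by simp only [hδ'']; linarith [hτ.1, hδ.1],
        by simp only [hδ'']; linarith [hτ.2]⟩
      rw [show δ'' + (δ'' - δ) = τ by simp only [hδ'']; ring] at this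
      exact this.symm
  have hXside : ∀ r ∈ Ioo (0:ℝ) s, U (1 - r) < X r := by
    intro r hr
    have h2 := hYside (r / 2) (hmemhalf r hr) (r / 2) ⟨by linarith [hr.1], by linarith [hr.2]⟩
    rwa [show (1 - r / 2) - r / 2 = 1 - r by ring] at h2
  have hXd : ∀ r ∈ Ioo (0:ℝ) s, HasDerivAt X (-2 / (X r - U (1 - r))) r := by
    intro r hr
    have hδmem : r / 2 ∈ Ioo (0:ℝ) s := hmemhalf r hr
    have hτ : r - r / 2 ∈ Ico (0:ℝ) (s - r / 2) := ⟨by linarith [hr.1], by linarith [hr.2]⟩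
    have hd := (hYsol (r / 2) hδmem (r - r / 2) hτ).2
    have hnhds : Ico (0:ℝ) (s - r / 2) ∈ nhds (r - r / 2) :=
      Ico_mem_nhds (by linarith [hr.1]) (by linarith [hr.2])
    have hD : HasDerivAt (Y (r / 2))
        (-2 / (Y (r / 2) (r - r / 2) - U ((1 - r / 2) - (r - r / 2)))) (r - r / 2) :=
      hd.hasDerivAt hnhds
    have hQ : Y (r / 2) (r - r / 2) = X r := by
      have := hXeq (r / 2) hδmem (r - r / 2) hτ
      rw [show r - r / 2 + r / 2 = r by ring] at this
      exact this.symm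
    have hEv : (fun r' => Y (r / 2) (r' - r / 2)) =ᶠ[nhds r] X := by
      filter_upwards [Ioo_mem_nhds (show r / 2 < r by linarith [hr.1]) hr.2] with r' hr'
      have := hXeq (r / 2) hδmem (r' - r / 2) ⟨by linarith [hr'.1], by linarith [hr'.2]⟩
      rw [show r' - r / 2 + r / 2 = r' by ring] at this
      exact this.symm
    have hDX : HasDerivAt (fun r' => Y (r / 2) (r' - r / 2))
        (-2 / (Y (r / 2) (r - r / 2) - U ((1 - r / 2) - (r - r / 2)))) r := by
      have hinner : HasDerivAt (fun r' : ℝ => r' - r / 2) 1 r := (hasDerivAt_id r).sub_const _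
      have := hD.comp r hinner
      simpa [Function.comp_def] using this
    have := hDX.congr_of_eventuallyEq hEv.symm
    rwa [show (1 - r / 2) - (r - r / 2) = 1 - r by ring, hQ] at this
  -- X is antitone.
  have hXcont : ContinuousOn X (Ioo 0 s) := fun r hr =>
    (hXd r hr).continuousAt.continuousWithinAt
  have hXanti : AntitoneOn X (Ioo 0 s) := by
    apply antitoneOn_of_deriv_nonpos (convex_Ioo 0 s) hXcont
    · rw [interior_Ioo]
      exact fun r hr => (hXd r hr).differentiableAt.differentiableWithinAt
    · intro r hr
      rw [interior_Ioo] at hr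
      rw [(hXd r hr).deriv]
      have hpos : 0 < X r - U (1 - r) := sub_pos.2 (hXside r hr)
      exact le_of_lt (div_neg_of_neg_of_pos (by norm_num) hpos)
  -- X is bounded above near 0.
  obtain ⟨C, hC⟩ : ∃ C, ∀ z ∈ Icc (0:ℝ) 1, U z ≤ C := by
    obtain ⟨C, hC⟩ := isCompact_Icc.bddAbove_image hU
    exact ⟨C, fun z hz => hC (mem_image_of_mem U hz)⟩
  have hu_le : ∀ r ∈ Ioo (0:ℝ) s, U (1 - r) ≤ C :=
    fun r hr => hC (1 - r) ⟨by linarith [hr.2], by linarith [hr.1]⟩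
  set c₀ : ℝ := C + 1 with hc₀
  set φ : ℝ → ℝ := fun r => (X r - c₀) ^ 2 + 4 * r with hφdef
  have hφd : ∀ r ∈ Ioo (0:ℝ) s, HasDerivAt φ
      (2 * (X r - c₀) * (-2 / (X r - U (1 - r))) + 4) r := by
    intro r hr
    have h1 := (((hXd r hr).sub_const c₀).pow 2).add ((hasDerivAt_id r).const_mul 4)
    convert h1 using 1
    push_cast
    · rfl
    · rfl
    · rfl
    · simp only [Pi.sub_apply, Nat.cast_ofNat, pow_one]
      ring
  have hφnn : ∀ r ∈ Ioo (0:ℝ) s, 0 ≤ 2 * (X r - c₀) * (-2 / (X r - U (1 - r))) + 4 := by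
    intro r hr
    have ha : 0 < X r - U (1 - r) := sub_pos.2 (hXside r hr)
    have hw : 1 ≤ c₀ - U (1 - r) := by have := hu_le r hr; simp only [hc₀]; linarith
    have hid : 2 * (X r - c₀) * (-2 / (X r - U (1 - r))) + 4
        = 4 * (c₀ - U (1 - r)) / (X r - U (1 - r)) := by
      field_simp
      ring
    rw [hid]
    apply div_nonneg _ (le_of_lt ha)
    linarith
  have hmem2 : s / 2 ∈ Ioo (0:ℝ) s := ⟨by linarith, by linarith⟩
  have hmonoφ : ∀ r ∈ Ioo (0:ℝ) s, r ≤ s / 2 → φ r ≤ φ (s / 2) := by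
    intro r hr hrle
    rcases eq_or_lt_of_le hrle with h | hlt
    · rw [h]
    · have hsub : Icc r (s / 2) ⊆ Ioo 0 s := fun z hz =>
        ⟨lt_of_lt_of_le hr.1 hz.1, lt_of_le_of_lt hz.2 hmem2.2⟩
      have hsub' : Ioo r (s / 2) ⊆ Ioo 0 s := fun z hz =>
        ⟨lt_trans hr.1 hz.1, lt_trans hz.2 hmem2.2⟩
      have hcont : ContinuousOn φ (Icc r (s / 2)) := fun z hz =>
        (hφd z (hsub hz)).continuousAt.continuousWithinAt
      have hdiff : DifferentiableOn ℝ φ (interior (Icc r (s / 2))) := by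
        rw [interior_Icc]
        exact fun z hz => (hφd z (hsub' hz)).differentiableAt.differentiableWithinAt
      have hnn : ∀ z ∈ interior (Icc r (s / 2)), 0 ≤ deriv φ z := by
        rw [interior_Icc]
        intro z hz
        rw [(hφd z (hsub' hz)).deriv]
        exact hφnn z (hsub' hz)
      exact monotoneOn_of_deriv_nonneg (convex_Icc r (s / 2)) hcont hdiff hnn
        (left_mem_Icc.2 hrle) (right_mem_Icc.2 hrle) hrle
  set M : ℝ := φ (s / 2) with hM
  have hbdd : ∀ r ∈ Ioo (0:ℝ) s, X r ≤ c₀ + Real.sqrt M := by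
    have key : ∀ r ∈ Ioo (0:ℝ) s, r ≤ s / 2 → X r ≤ c₀ + Real.sqrt M := by
      intro r hr hle
      have h1 : (X r - c₀) ^ 2 ≤ M := by
        have h2 := hmonoφ r hr hle
        have : (X r - c₀) ^ 2 + 4 * r = φ r := rfl
        nlinarith [hr.1]
      rcases le_total (X r - c₀) 0 with h | h
      · have := Real.sqrt_nonneg M
        linarith
      · have h3 : X r - c₀ = Real.sqrt ((X r - c₀) ^ 2) := (Real.sqrt_sq h).symm
        have h4 : Real.sqrt ((X r - c₀) ^ 2) ≤ Real.sqrt M := Real.sqrt_le_sqrt h1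
        linarith [h3 ▸ h4]
    intro r hr
    rcases le_total r (s / 2) with h | h
    · exact key r hr h
    · calc X r ≤ X (s / 2) := hXanti hmem2 hr h
        _ ≤ c₀ + Real.sqrt M := key (s / 2) hmem2 le_rfl
  -- the limit of X at 0⁺
  have hne : (X '' Ioo 0 s).Nonempty := ⟨X (s / 2), mem_image_of_mem _ hmem2⟩
  have hbdd' : BddAbove (X '' Ioo 0 s) := by
    refine ⟨c₀ + Real.sqrt M, ?_⟩
    rintro _ ⟨r, hr, rfl⟩
    exact hbdd r hr
  set x₀ : ℝ := sSup (X '' Ioo 0 s) with hx₀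
  have hle_x₀ : ∀ r ∈ Ioo (0:ℝ) s, X r ≤ x₀ := fun r hr =>
    le_csSup hbdd' (mem_image_of_mem _ hr)
  have hlim : Filter.Tendsto X (nhdsWithin 0 (Ioi 0)) (nhds x₀) := by
    rw [tendsto_order]
    constructor
    · intro b hb
      obtain ⟨_, ⟨r₀, hr₀, rfl⟩, hbr₀⟩ := exists_lt_of_lt_csSup hne hb
      have hmemI : Ioo (0:ℝ) r₀ ∈ nhdsWithin 0 (Ioi 0) := by
        rw [← Ioi_inter_Iio]
        exact Filter.inter_mem self_mem_nhdsWithin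
          (mem_nhdsWithin_of_mem_nhds (Iio_mem_nhds hr₀.1))
      filter_upwards [hmemI] with r hr
      exact lt_of_lt_of_le hbr₀ (hXanti ⟨hr.1, lt_trans hr.2 hr₀.2⟩ hr₀ (le_of_lt hr.2))
    · intro b hb
      have hmemI : Ioo (0:ℝ) s ∈ nhdsWithin 0 (Ioi 0) := by
        rw [← Ioi_inter_Iio]
        exact Filter.inter_mem self_mem_nhdsWithin
          (mem_nhdsWithin_of_mem_nhds (Iio_mem_nhds hs0))
      filter_upwards [hmemI] with r hr
      exact lt_of_le_of_lt (hle_x₀ r hr) hb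
  -- x₀ > U 1, via the sequence t
  have hx0gt : U 1 < x₀ := by
    obtain ⟨n, hn⟩ : ∃ n, 1 - s < t n := (htlim.eventually (eventually_gt_nhds (by linarith))).exists
    have hrmem : 1 - t n ∈ Ioo (0:ℝ) s := ⟨by linarith [ht1 n], by linarith⟩
    have h1 := hXside (1 - t n) hrmem
    rw [show (1:ℝ) - (1 - t n) = t n by ring] at h1
    exact lt_of_le_of_lt (hcmp n) (lt_of_lt_of_le h1 (hle_x₀ _ hrmem))
  -- the full solution
  set xF : ℝ → ℝ := fun r => if r ≤ 0 then x₀ else X r with hxFdef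
  have hxF0 : xF 0 = x₀ := if_pos le_rfl
  have hxFpos : ∀ r : ℝ, 0 < r → xF r = X r := fun r hr => if_neg (not_le.2 hr)
  have hxFlim : Filter.Tendsto xF (nhdsWithin 0 (Ioi 0)) (nhds x₀) := by
    apply hlim.congr'
    filter_upwards [self_mem_nhdsWithin] with r hr
    exact (hxFpos r hr).symm
  have hxFd : ∀ r ∈ Ioo (0:ℝ) s, HasDerivAt xF (-2 / (xF r - U (1 - r))) r := by
    intro r hr
    have hEv : X =ᶠ[nhds r] xF := by
      filter_upwards [Ioi_mem_nhds hr.1] with z hz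
      exact (hxFpos z hz).symm
    have := (hXd r hr).congr_of_eventuallyEq hEv.symm
    rwa [← hxFpos r hr.1] at this
  have hUtend : Filter.Tendsto (fun r => U (1 - r)) (nhdsWithin 0 (Ioi 0)) (nhds (U 1)) := by
    have hU1 : ContinuousWithinAt U (Icc 0 1) 1 := hU 1 (by norm_num)
    have hm : Filter.Tendsto (fun r : ℝ => 1 - r) (nhdsWithin 0 (Ioi 0))
        (nhdsWithin 1 (Icc 0 1)) := by
      apply tendsto_nhdsWithin_of_tendsto_nhds_of_eventually_within
      · have : Filter.Tendsto (fun r : ℝ => 1 - r) (nhds 0) (nhds (1 - 0)) :=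
          (continuous_const.sub continuous_id).tendsto 0
        rw [sub_zero] at this
        exact this.mono_left nhdsWithin_le_nhds
      · have hmemI : Ioo (0:ℝ) 1 ∈ nhdsWithin 0 (Ioi 0) := by
          rw [← Ioi_inter_Iio]
          exact Filter.inter_mem self_mem_nhdsWithin
            (mem_nhdsWithin_of_mem_nhds (Iio_mem_nhds one_pos))
        filter_upwards [hmemI] with r hr
        exact ⟨by linarith [hr.2], by linarith [hr.1]⟩
    exact hU1.tendsto.comp hm
  have hsol : IsBackwardSol U 1 s xF := by
    intro τ hτ
    rcases eq_or_lt_of_le hτ.1 with h0 | hpos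
    · rw [← h0]
      constructor
      · rw [sub_zero, hxF0]
        exact ne_of_gt hx0gt
      · have hgt : Filter.Tendsto (fun r => -2 / (xF r - U (1 - r))) (nhdsWithin 0 (Ioi 0))
            (nhds (-2 / (x₀ - U 1))) := by
          apply Filter.Tendsto.div tendsto_const_nhds (hxFlim.sub hUtend)
          exact sub_ne_zero.2 (ne_of_gt hx0gt)
        have hend := hasDerivWithinAt_left (f := xF)
          (g := fun r => -2 / (xF r - U (1 - r))) hs0 (hxF0 ▸ hxFlim) hxFd hgt
        rw [sub_zero, hxF0]
        exact hend
    · constructor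
      · rw [hxFpos τ hpos]
        exact ne_of_gt (hXside τ ⟨hpos, hτ.2⟩)
      · exact (hxFd τ ⟨hpos, hτ.2⟩).hasDerivWithinAt
  have hhit : HitsSingularity U 1 s xF := by
    have h1 := hYhit (s / 2) hmem2
    have hmap : Filter.Tendsto (fun r : ℝ => r - s / 2) (nhdsWithin s (Iio s))
        (nhdsWithin (s - s / 2) (Iio (s - s / 2))) := by
      have := tendsto_shift (-(s / 2)) s
      simpa [sub_eq_add_neg] using this
    have h2 := h1.comp hmap
    have h3 : (fun r => Y (s / 2) (r - s / 2)) =ᶠ[nhdsWithin s (Iio s)] xF := by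
      have hmemI : Ioo (s / 2) s ∈ nhdsWithin s (Iio s) :=
        Ioo_mem_nhdsLT_of_mem ⟨hmem2.2, le_refl s⟩
      filter_upwards [hmemI] with r hr
      have := hXeq (s / 2) hmem2 (r - s / 2) ⟨by linarith [hr.1], by linarith [hr.2]⟩
      rw [show r - s / 2 + s / 2 = r by ring] at this
      rw [← this, hxFpos r (by linarith [hr.1, hmem2.1])]
    have h4 := h2.congr' h3
    rw [HitsSingularity, show (1:ℝ) - s = (1 - s / 2) - (s - s / 2) by ring]
    exact h4
  exact ⟨xF, by rw [hxF0]; exact hx0gt, hsol, hhit⟩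

end Existence

/-- (Corollary.)  If `U : [0,1] → ℝ` is continuous, welded on `[0,T']`
for all `T' ∈ (0,1)`, and there are increasing sequences `sₙ, tₙ → 1` of positive
numbers with `U(sₙ) ≤ U(1) ≤ U(tₙ)` for all `n`, then `U` is welded on `[0,1]`. -/
theorem stmt_4 (U : ℝ → ℝ) (hU : ContinuousOn U (Set.Icc 0 1))
    (s t : ℕ → ℝ) (hsmono : StrictMono s) (htmono : StrictMono t)
    (hspos : ∀ n, 0 < s n) (htpos : ∀ n, 0 < t n)
    (hslim : Filter.Tendsto s Filter.atTop (nhds 1))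
    (htlim : Filter.Tendsto t Filter.atTop (nhds 1))
    (hcmp : ∀ n, U (s n) ≤ U 1 ∧ U 1 ≤ U (t n))
    (hweld : ∀ T' ∈ Set.Ioo (0 : ℝ) 1, Welded U T') :
    Welded U 1 := by
  have hslt1 : ∀ n, s n < 1 := fun n =>
    lt_of_lt_of_le (hsmono (Nat.lt_succ_self n)) (hsmono.monotone.ge_of_tendsto hslim (n + 1))
  have htlt1 : ∀ n, t n < 1 := fun n =>
    lt_of_lt_of_le (htmono (Nat.lt_succ_self n)) (htmono.monotone.ge_of_tendsto htlim (n + 1))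
  intro σ hσ
  obtain ⟨xu, hxu0, hxusol, hxuhit⟩ :=
    exists_upper U hU t htlt1 htlim (fun n => (hcmp n).2) hweld hσ.1 hσ.2
  set V : ℝ → ℝ := fun r => -U r with hVdef
  have hVcont : ContinuousOn V (Set.Icc 0 1) := hU.neg
  have hVweld : ∀ T' ∈ Set.Ioo (0:ℝ) 1, Welded V T' := fun T' hT' => welded_neg (hweld T' hT')
  have hVcmp : ∀ n, V 1 ≤ V (s n) := fun n => neg_le_neg (hcmp n).1
  obtain ⟨xv, hxv0, hxvsol, hxvhit⟩ :=
    exists_upper V hVcont s hslt1 hslim hVcmp hVweld hσ.1 hσ.2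
  have hxv0' : -U 1 < xv 0 := hxv0
  refine ⟨-(xv 0), xu 0, by linarith, hxu0, ?_⟩
  have hxuside := side_pos hU le_rfl hσ.2 hxusol hxu0
  have hxvside := side_pos hVcont le_rfl hσ.2 hxvsol hxv0
  have hUV : U = (fun r => -V r) := by funext r; simp [hVdef]
  ext a
  simp only [mem_setOf_eq, mem_insert_iff, mem_singleton_iff]
  constructor
  · rintro ⟨x, hx0, hsol, hhit⟩
    have hne : x 0 ≠ U 1 := by
      have := (hsol 0 ⟨le_rfl, hσ.1⟩).1
      rwa [sub_zero] at this
    rcases lt_or_gt_of_ne hne with hlt | hgt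
    · left
      have hsolV : IsBackwardSol V 1 σ (fun r => -x r) := isBackwardSol_neg hsol
      have hhitV : HitsSingularity V 1 σ (fun r => -x r) := hitsSingularity_neg hhit
      have hsideV : V 1 < -x 0 := neg_lt_neg hlt
      have := uniq_same_side hVcont le_rfl hσ.1 hσ.2 hsolV hxvsol
        (side_pos hVcont le_rfl hσ.2 hsolV hsideV) hxvside hhitV hxvhit 0 ⟨le_rfl, hσ.1⟩
      rw [← hx0]
      linarith [this]
    · right
      have := uniq_same_side hU le_rfl hσ.1 hσ.2 hsol hxusol
        (side_pos hU le_rfl hσ.2 hsol hgt) hxuside hhit hxuhit 0 ⟨le_rfl, hσ.1⟩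
      rw [← hx0]
      exact this
  · rintro (rfl | rfl)
    · refine ⟨fun r => -xv r, rfl, ?_, ?_⟩
      · rw [hUV]; exact isBackwardSol_neg hxvsol
      · rw [hUV]; exact hitsSingularity_neg hxvhit
    · exact ⟨xu, rfl, hxusol, hxuhit⟩
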